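/- Discontinuity under non-uniqueness (constructive core): suppose for R₀ ∈ C(S×A) there exists a state s₀ ∈ S such that A*(s₀;R₀) is finite with at least two distinct elements, and let a₂ ∈ A*(s₀;R₀). Then for every δ > 0 there exists R' ∈ C(S×A) with ‖R' − R₀‖∞ ≤ δ and A*(s₀;R') = {a₂}. Consequently, any policy selection map R ↦ π_R with π_R(s) ∈ A*(s;R) for all s and π_{R₀}(s₀) = a₁ for some a₁ ∈ A*(s₀;R₀) with a₁ ≠ a₂ is discontinuous at R₀ in the topology of pointwise convergence of policies. -/
import Mathlib


open MeasureTheory ProbabilityTheory Filter Topology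

private lemma aux_contSup {S A : Type*} [TopologicalSpace S] [TopologicalSpace A]
    [CompactSpace A] (Q : C(S × A, ℝ)) : Continuous fun s => ⨆ a : A, Q (s, a) := by
  have h := (isCompact_univ (X := A)).continuous_sSup
    (f := fun s a => Q (s, a)) (by exact Q.continuous)
  simpa [Set.image_univ, iSup] using h

private lemma aux_supDiff {A : Type*} [TopologicalSpace A] [CompactSpace A] [Nonempty A]
    {F G : A → ℝ} (hF : Continuous F) (hG : Continuous G) {c : ℝ}
    (h : ∀ a, |F a - G a| ≤ c) : |(⨆ a, F a) - ⨆ a, G a| ≤ c := by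
  have bF : BddAbove (Set.range F) := by
    simpa using isCompact_univ.bddAbove_image hF.continuousOn
  have bG : BddAbove (Set.range G) := by
    simpa using isCompact_univ.bddAbove_image hG.continuousOn
  rw [abs_sub_le_iff]
  constructor
  · rw [sub_le_iff_le_add]
    refine ciSup_le fun a => ?_
    have h1 := (abs_sub_le_iff.mp (h a)).1
    have h2 := le_ciSup bG a
    linarith
  · rw [sub_le_iff_le_add]
    refine ciSup_le fun a => ?_
    have h1 := (abs_sub_le_iff.mp (h a)).2
    have h2 := le_ciSup bF a
    linarith

private lemma aux_integrable {S : Type*} [MetricSpace S] [CompactSpace S]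
    [MeasurableSpace S] [BorelSpace S] (μ : Measure S) [IsFiniteMeasure μ]
    (f : C(S, ℝ)) : Integrable f μ :=
  f.continuous.integrable_of_hasCompactSupport (HasCompactSupport.of_compactSpace f)

/-- Discontinuity under non-uniqueness (constructive core): if
`A*(s₀;R₀)` is finite with at least two distinct elements `a₁ ≠ a₂`, then for every
`δ > 0` there is `R'` with `‖R' - R₀‖ ≤ δ` and `A*(s₀;R') = {a₂}`. Consequently any
policy selection map `R ↦ π_R` with `π_R(s) ∈ A*(s;R)` for all `s` and
`π_{R₀}(s₀) = a₁` is discontinuous at `R₀` in the topology of pointwise convergence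
of policies. Here `Qstar R` denotes the (unique) Bellman fixed point for reward `R`. -/
theorem policy_discontinuity_under_nonuniqueness
    {S A : Type*}
    [MetricSpace S] [CompactSpace S] [MeasurableSpace S] [BorelSpace S]
    [MetricSpace A] [CompactSpace A] [Nonempty A] [MeasurableSpace A] [BorelSpace A]
    (γ : ℝ) (hγ0 : 0 ≤ γ) (hγ1 : γ < 1)
    (P : Kernel (S × A) S) [IsMarkovKernel P]
    (hFeller : ∀ f : C(S, ℝ), Continuous fun p : S × A => ∫ s', f s' ∂(P p))
    (Qstar : C(S × A, ℝ) → C(S × A, ℝ))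
    (hQstar : ∀ (R : C(S × A, ℝ)) (p : S × A),
      Qstar R p = R p + γ * ∫ s', (⨆ a' : A, Qstar R (s', a')) ∂(P p))
    (R₀ : C(S × A, ℝ)) (s₀ : S)
    (hfin : {a : A | ∀ b : A, Qstar R₀ (s₀, b) ≤ Qstar R₀ (s₀, a)}.Finite)
    (a₁ a₂ : A)
    (ha₁ : a₁ ∈ {a : A | ∀ b : A, Qstar R₀ (s₀, b) ≤ Qstar R₀ (s₀, a)})
    (ha₂ : a₂ ∈ {a : A | ∀ b : A, Qstar R₀ (s₀, b) ≤ Qstar R₀ (s₀, a)})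
    (hne : a₁ ≠ a₂) :
    (∀ δ > (0 : ℝ), ∃ R' : C(S × A, ℝ), ‖R' - R₀‖ ≤ δ ∧
      {a : A | ∀ b : A, Qstar R' (s₀, b) ≤ Qstar R' (s₀, a)} = {a₂}) ∧
    (∀ pol : C(S × A, ℝ) → S → A,
      (∀ (R : C(S × A, ℝ)) (s : S),
        pol R s ∈ {a : A | ∀ b : A, Qstar R (s, b) ≤ Qstar R (s, a)}) →
      pol R₀ s₀ = a₁ → ¬ ContinuousAt pol R₀) := by
  have key : ∀ δ > (0 : ℝ), ∃ R' : C(S × A, ℝ), ‖R' - R₀‖ ≤ δ ∧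
      {a : A | ∀ b : A, Qstar R' (s₀, b) ≤ Qstar R' (s₀, a)} = {a₂} := by
    intro δ hδ
    set ε : ℝ := δ / 2 with hε
    have hεpos : 0 < ε := by positivity
    -- bump function peaked at a₂
    have hGcont : Continuous fun p : S × A => 1 - min (dist p.2 a₂) 1 :=
      continuous_const.sub
        (((continuous_snd.dist continuous_const)).min continuous_const)
    set G : C(S × A, ℝ) := ⟨fun p => 1 - min (dist p.2 a₂) 1, hGcont⟩ with hGdef
    have hG0 : ∀ p, 0 ≤ G p := fun p => by
      simp only [hGdef, ContinuousMap.coe_mk]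
      have : min (dist p.2 a₂) 1 ≤ 1 := min_le_right _ _
      linarith
    have hG1 : ∀ p, G p ≤ 1 := fun p => by
      simp only [hGdef, ContinuousMap.coe_mk]
      have : 0 ≤ min (dist p.2 a₂) 1 := le_min dist_nonneg zero_le_one
      linarith
    have hGa₂ : ∀ s : S, G (s, a₂) = 1 := fun s => by
      simp [hGdef]
    set Q' : C(S × A, ℝ) := Qstar R₀ + ε • G with hQ'def
    have hQ'app : ∀ p, Q' p = Qstar R₀ p + ε * G p := fun p => by
      simp [hQ'def]
    set f' : C(S, ℝ) := ⟨fun s => ⨆ a : A, Q' (s, a), aux_contSup Q'⟩ with hf'def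
    set f₀ : C(S, ℝ) := ⟨fun s => ⨆ a : A, Qstar R₀ (s, a), aux_contSup (Qstar R₀)⟩
      with hf₀def
    set I' : C(S × A, ℝ) := ⟨fun p => ∫ s', f' s' ∂(P p), hFeller f'⟩ with hI'def
    set R' : C(S × A, ℝ) := Q' - γ • I' with hR'def
    have hR'app : ∀ p, R' p = Q' p - γ * ∫ s', f' s' ∂(P p) := fun p => by
      simp [hR'def, hI'def]
    refine ⟨R', ?_, ?_⟩
    · -- norm bound
      rw [ContinuousMap.norm_le _ hδ.le]
      intro p
      have hR₀app : R₀ p = Qstar R₀ p - γ * ∫ s', f₀ s' ∂(P p) := by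
        have := hQstar R₀ p
        simp only [hf₀def, ContinuousMap.coe_mk]
        linarith
      have hint : |(∫ s', f' s' ∂(P p)) - ∫ s', f₀ s' ∂(P p)| ≤ ε := by
        rw [← integral_sub (aux_integrable _ f') (aux_integrable _ f₀)]
        have := norm_integral_le_of_norm_le_const (μ := P p)
          (f := fun s' => f' s' - f₀ s') (C := ε) ?_
        · simpa [measure_univ] using this
        · refine Eventually.of_forall fun s' => ?_
          have : ∀ a : A, |Q' (s', a) - Qstar R₀ (s', a)| ≤ ε := by
            intro a
            rw [hQ'app]
            have h0 := hG0 (s', a); have h1 := hG1 (s', a)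
            rw [abs_le]
            constructor <;> nlinarith
          have := aux_supDiff
            (F := fun a : A => Q' (s', a)) (G := fun a : A => Qstar R₀ (s', a))
            (Q'.continuous.comp (by fun_prop)) ((Qstar R₀).continuous.comp (by fun_prop))
            this
          simpa [hf'def, hf₀def, Real.norm_eq_abs] using this
      have : |(R' - R₀) p| ≤ δ := by
        have heq : (R' - R₀) p =
            ε * G p - γ * ((∫ s', f' s' ∂(P p)) - ∫ s', f₀ s' ∂(P p)) := by
          simp only [ContinuousMap.sub_apply]
          rw [hR'app, hR₀app, hQ'app]; ring
        rw [heq]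
        have h0 := hG0 p; have h1 := hG1 p
        have habs := abs_le.mp hint
        rw [abs_le]
        constructor <;> nlinarith
      simpa [Real.norm_eq_abs] using this
    · -- argmax is {a₂}; first show Qstar R' = Q'
      have hfix : Qstar R' = Q' := by
        set D : C(S × A, ℝ) := Qstar R' - Q' with hDdef
        set u : C(S, ℝ) := ⟨fun s => ⨆ a : A, Qstar R' (s, a), aux_contSup (Qstar R')⟩
          with hudef
        have hbound : ∀ p : S × A, |D p| ≤ γ * ‖D‖ := by
          intro p
          have hDapp : D p = γ * ((∫ s', u s' ∂(P p)) - ∫ s', f' s' ∂(P p)) := by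
            have h1 := hQstar R' p
            have h2 := hR'app p
            simp only [hDdef, ContinuousMap.sub_apply]
            simp only [hudef, ContinuousMap.coe_mk] at h1 ⊢
            rw [h1, h2]; ring
          have hint : |(∫ s', u s' ∂(P p)) - ∫ s', f' s' ∂(P p)| ≤ ‖D‖ := by
            rw [← integral_sub (aux_integrable _ u) (aux_integrable _ f')]
            have := norm_integral_le_of_norm_le_const (μ := P p)
              (f := fun s' => u s' - f' s') (C := ‖D‖) ?_
            · simpa [measure_univ] using this
            · refine Eventually.of_forall fun s' => ?_
              have hD : ∀ a : A, |Qstar R' (s', a) - Q' (s', a)| ≤ ‖D‖ := fun a => by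
                have := D.norm_coe_le_norm (s', a)
                simpa [hDdef, Real.norm_eq_abs] using this
              have := aux_supDiff
                (F := fun a : A => Qstar R' (s', a)) (G := fun a : A => Q' (s', a))
                ((Qstar R').continuous.comp (by fun_prop))
                (Q'.continuous.comp (by fun_prop)) hD
              simpa [hudef, hf'def, Real.norm_eq_abs] using this
          rw [hDapp, abs_mul, abs_of_nonneg hγ0]
          exact mul_le_mul_of_nonneg_left hint hγ0
        have hnorm : ‖D‖ ≤ γ * ‖D‖ := by
          rw [ContinuousMap.norm_le _ (by positivity : (0:ℝ) ≤ γ * ‖D‖)]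
          intro p; simpa [Real.norm_eq_abs] using hbound p
        have hD0 : ‖D‖ = 0 := by nlinarith [norm_nonneg D]
        have : D = 0 := norm_eq_zero.mp hD0
        have := sub_eq_zero.mp (by simpa [hDdef] using this)
        exact this
      rw [hfix]
      ext a
      simp only [Set.mem_setOf_eq, Set.mem_singleton_iff]
      constructor
      · intro h
        have h2 := h a₂
        rw [hQ'app, hQ'app, hGa₂] at h2
        have hQle : Qstar R₀ (s₀, a) ≤ Qstar R₀ (s₀, a₂) := ha₂ a
        have hga : 1 ≤ G (s₀, a) := by nlinarith
        by_contra hne'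
        have hdpos : 0 < dist a a₂ := dist_pos.mpr hne'
        have : 0 < min (dist a a₂) 1 := lt_min hdpos one_pos
        simp only [hGdef, ContinuousMap.coe_mk] at hga
        linarith
      · intro ha b
        subst ha
        rw [hQ'app, hQ'app, hGa₂]
        have h1 := hG1 (s₀, b)
        have h2 := ha₂ b
        nlinarith
  refine ⟨key, ?_⟩
  intro pol hsel hpol hcont
  have h1 : ContinuousAt (fun R => pol R s₀) R₀ :=
    (continuous_apply s₀).continuousAt.comp hcont
  have hU : {a : A | a ≠ a₂} ∈ 𝓝 (pol R₀ s₀) := by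
    rw [hpol]
    exact isOpen_compl_singleton.mem_nhds hne
  have hpre := h1.preimage_mem_nhds hU
  rw [Metric.mem_nhds_iff] at hpre
  obtain ⟨r, hr, hball⟩ := hpre
  obtain ⟨R', hR'norm, hR'set⟩ := key (r / 2) (by positivity)
  have hRball : R' ∈ Metric.ball R₀ r := by
    rw [Metric.mem_ball, dist_eq_norm]
    linarith
  have := hball hRball
  have h2 : pol R' s₀ ∈ ({a₂} : Set A) := hR'set ▸ hsel R' s₀
  exact this h2
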